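/- Fix A ∈ ℝ and positive integers n ≤ N, and let (E_S)_{S ∈ S} be any family of events, each measurable with respect to X. Define the truncated likelihood ratio L^E_π = (1/|S|) · Σ_{S ∈ S} exp(A·X_S − A²n²/2) · 1_{E_S}. Then the minimax risk satisfies R_n(A) ≥ E₀(L^E_π) − (1/2)·√(Var₀(L^E_π)), where E₀ and Var₀ denote expectation and variance under P₀. -/

import Mathlib

open MeasureTheory ProbabilityTheory Real Filter Topology

noncomputable section

/-- Law of the N×N Gaussian observation matrix with mean matrix θ and unit variances. -/
def PTheta (N : ℕ) (θ : Fin N → Fin N → ℝ) : Measure (Fin N → Fin N → ℝ) :=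
  Measure.pi fun i => Measure.pi fun j => gaussianReal (θ i j) 1

/-- Parameter space Θ(A, n, N). -/
def ThetaSet (A : ℝ) (n N : ℕ) : Set (Fin N → Fin N → ℝ) :=
  {θ | ∃ R C : Finset (Fin N), R.card = n ∧ C.card = n ∧
    (∀ i j, i ∈ R → j ∈ C → A ≤ θ i j) ∧
    (∀ i j, ¬(i ∈ R ∧ j ∈ C) → θ i j = 0)}

/-- Risk of the test with rejection region `T`: type-I error plus worst-case type-II error. -/
def testRisk (n N : ℕ) (A : ℝ) (T : Set (Fin N → Fin N → ℝ)) : ℝ :=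
  (PTheta N 0 T).toReal + ⨆ θ : ThetaSet A n N, (PTheta N θ.1 Tᶜ).toReal

/-- Minimax risk over all (measurable) tests. -/
def minimaxRisk (n N : ℕ) (A : ℝ) : ℝ :=
  ⨅ T : {T : Set (Fin N → Fin N → ℝ) // MeasurableSet T}, testRisk n N A T.1

/-- The family S of n×n product subsets R×C of [N]×[N]. -/
def SIdx (n N : ℕ) : Type :=
  {p : Finset (Fin N) × Finset (Fin N) // p.1.card = n ∧ p.2.card = n}

instance (n N : ℕ) : Fintype (SIdx n N) := by unfold SIdx; infer_instance

/-- The sum X_S of the entries of x over the product set S = R×C. -/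
def XS {n N : ℕ} (S : SIdx n N) (x : Fin N → Fin N → ℝ) : ℝ :=
  ∑ i ∈ S.1.1, ∑ j ∈ S.1.2, x i j

/-- The likelihood ratio truncated by a family of events (E_S)_{S ∈ S}:
`L^E_π = (1/|S|) Σ_S exp(A X_S − A²n²/2) 1_{E_S}`. -/
def LpiE (n N : ℕ) (A : ℝ) (E : SIdx n N → Set (Fin N → Fin N → ℝ))
    (x : Fin N → Fin N → ℝ) : ℝ :=
  (((N.choose n : ℝ)) ^ 2)⁻¹ * ∑ S : SIdx n N,
    (E S).indicator (fun y => Real.exp (A * XS S y - A ^ 2 * (n : ℝ) ^ 2 / 2)) x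

namespace RiskAux
open scoped ENNReal NNReal

theorem my_lintegral_pi_prod : ∀ {m : ℕ} {α : Fin m → Type} [∀ i, MeasurableSpace (α i)]
    (μ : ∀ i, Measure (α i)) [∀ i, SigmaFinite (μ i)] (f : ∀ i, α i → ℝ≥0∞)
    (_hf : ∀ i, Measurable (f i)),
    ∫⁻ x, ∏ i, f i (x i) ∂Measure.pi μ = ∏ i, ∫⁻ y, f i y ∂μ i := by
  intro m
  induction m with
  | zero =>
    intro α _ μ _ f hf
    simp [Measure.pi_of_empty]
  | succ k ih =>
    intro α _ μ _ f hf
    have h := (measurePreserving_piFinSuccAbove μ 0).symm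
    rw [← h.map_eq, lintegral_map_equiv]
    have heq : ∀ (a : α 0 × ((j : Fin k) → α (Fin.succAbove 0 j))),
        ∏ i, f i (((MeasurableEquiv.piFinSuccAbove α 0).symm a) i)
          = f 0 a.1 * ∏ j : Fin k, f (Fin.succAbove 0 j) (a.2 j) := by
      intro a
      rw [Fin.prod_univ_succAbove _ 0]
      simp [MeasurableEquiv.piFinSuccAbove]
      rfl
    simp_rw [heq]
    have hg : Measurable fun (z : (j : Fin k) → α (Fin.succAbove 0 j)) =>
        ∏ j : Fin k, f (Fin.succAbove 0 j) (z j) :=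
      Finset.measurable_prod _ fun j _ => (hf _).comp (measurable_pi_apply j)
    rw [lintegral_prod_mul (hf 0).aemeasurable hg.aemeasurable,
      ih _ _ (fun j => hf _), Fin.prod_univ_succAbove (fun i => ∫⁻ y, f i y ∂μ i) 0]

theorem my_pi_withDensity {m : ℕ} {α : Fin m → Type} [∀ i, MeasurableSpace (α i)]
    (μ : ∀ i, Measure (α i)) [∀ i, SigmaFinite (μ i)]
    (ν : ∀ i, Measure (α i)) [∀ i, SigmaFinite (ν i)]
    (f : ∀ i, α i → ℝ≥0∞) (hf : ∀ i, Measurable (f i))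
    (hν : ∀ i, ν i = (μ i).withDensity (f i)) :
    Measure.pi ν = (Measure.pi μ).withDensity (fun x => ∏ i, f i (x i)) := by
  refine Measure.pi_eq fun s hs => ?_
  rw [withDensity_apply _ (MeasurableSet.univ_pi hs),
    ← lintegral_indicator (MeasurableSet.univ_pi hs)]
  have hind : ∀ x, (Set.pi Set.univ s).indicator (fun x => ∏ i, f i (x i)) x
      = ∏ i, (s i).indicator (f i) (x i) := by
    intro x
    by_cases hx : x ∈ Set.pi Set.univ s
    · rw [Set.indicator_of_mem hx]
      exact Finset.prod_congr rfl fun i _ =>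
        (Set.indicator_of_mem (hx i (Set.mem_univ i)) _).symm
    · rw [Set.indicator_of_notMem hx]
      rw [Set.mem_univ_pi] at hx
      push_neg at hx
      obtain ⟨i, hi⟩ := hx
      exact (Finset.prod_eq_zero (Finset.mem_univ i) (Set.indicator_of_notMem hi _)).symm
  simp_rw [hind]
  rw [my_lintegral_pi_prod μ _ (fun i => (hf i).indicator (hs i))]
  refine Finset.prod_congr rfl fun i _ => ?_
  rw [lintegral_indicator (hs i), ← withDensity_apply _ (hs i), ← hν i]

theorem gaussianReal_shift (mm : ℝ) :
    gaussianReal mm 1 = (gaussianReal 0 1).withDensity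
      (fun x => ENNReal.ofReal (Real.exp (mm * x - mm ^ 2 / 2))) := by
  rw [gaussianReal_of_var_ne_zero _ one_ne_zero, gaussianReal_of_var_ne_zero _ one_ne_zero,
    ← withDensity_mul _ (measurable_gaussianPDF _ _) (by fun_prop)]
  congr 1
  funext x
  unfold gaussianPDF
  simp only [Pi.mul_apply]
  rw [← ENNReal.ofReal_mul (gaussianPDFReal_nonneg _ _ _)]
  congr 1
  unfold gaussianPDFReal
  conv_rhs => rw [mul_assoc, ← Real.exp_add]
  congr 1
  rw [Real.exp_eq_exp]
  push_cast
  ring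

def dens (a : ℝ) : ℝ → ℝ≥0∞ := fun t => ENNReal.ofReal (Real.exp (a * t - a ^ 2 / 2))

lemma measurable_dens (a : ℝ) : Measurable (dens a) := by unfold dens; fun_prop

lemma dens_zero (t : ℝ) : dens 0 t = 1 := by simp [dens]

theorem PTheta_withDensity (N : ℕ) (θ : Fin N → Fin N → ℝ) :
    PTheta N θ = (PTheta N 0).withDensity
      (fun x => ∏ i, ∏ j, dens (θ i j) (x i j)) := by
  have inner : ∀ i, Measure.pi (fun j => gaussianReal (θ i j) 1)
      = (Measure.pi fun _ : Fin N => gaussianReal 0 1).withDensity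
          (fun x' => ∏ j, dens (θ i j) (x' j)) := fun i =>
    my_pi_withDensity (fun _ => gaussianReal 0 1) (fun j => gaussianReal (θ i j) 1)
      (fun j => dens (θ i j)) (fun j => measurable_dens _)
      (fun j => gaussianReal_shift (θ i j))
  have outer := my_pi_withDensity (fun _ : Fin N => Measure.pi fun _ : Fin N => gaussianReal 0 1)
    (fun i => Measure.pi fun j => gaussianReal (θ i j) 1)
    (fun i x' => ∏ j, dens (θ i j) (x' j))
    (fun i => Finset.measurable_prod _ fun j _ =>
      (measurable_dens _).comp (measurable_pi_apply j)) inner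
  unfold PTheta
  simp only [Pi.zero_apply]
  exact outer

variable {n N : ℕ}

/-- The mean matrix equal to `A` on `R × C` and `0` elsewhere. -/
def thetaS (A : ℝ) (S : SIdx n N) : Fin N → Fin N → ℝ :=
  fun i j => if i ∈ S.1.1 ∧ j ∈ S.1.2 then A else 0

lemma thetaS_mem (A : ℝ) (S : SIdx n N) : thetaS A S ∈ ThetaSet A n N :=
  ⟨S.1.1, S.1.2, S.2.1, S.2.2, fun i j hi hj => by simp [thetaS, hi, hj],
    fun i j h => by simp only [thetaS, if_neg h]⟩

lemma prod_dens_thetaS (A : ℝ) (S : SIdx n N) (x : Fin N → Fin N → ℝ) :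
    (∏ i, ∏ j, dens (thetaS A S i j) (x i j))
      = ENNReal.ofReal (Real.exp (A * XS S x - A ^ 2 * (n : ℝ) ^ 2 / 2)) := by
  have hof : ∀ (s : Finset (Fin N)) (g : Fin N → ℝ),
      ∏ j ∈ s, ENNReal.ofReal (Real.exp (g j))
        = ENNReal.ofReal (Real.exp (∑ j ∈ s, g j)) := fun s g => by
    rw [Real.exp_sum, ENNReal.ofReal_prod_of_nonneg (fun _ _ => (Real.exp_pos _).le)]
  have h1 : (∏ i, ∏ j, dens (thetaS A S i j) (x i j))
      = ∏ i ∈ S.1.1, ∏ j ∈ S.1.2,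
          ENNReal.ofReal (Real.exp (A * x i j - A ^ 2 / 2)) := by
    rw [← Finset.prod_subset (Finset.subset_univ S.1.1) (fun i _ hi => ?_)]
    · refine Finset.prod_congr rfl fun i hi => ?_
      rw [← Finset.prod_subset (Finset.subset_univ S.1.2) (fun j _ hj => ?_)]
      · refine Finset.prod_congr rfl fun j hj => ?_
        rw [thetaS, if_pos ⟨hi, hj⟩]; rfl
      · have h0 : thetaS A S i j = 0 := by simp [thetaS, hj]
        rw [h0, dens_zero]
    · refine Finset.prod_eq_one fun j _ => ?_
      have h0 : thetaS A S i j = 0 := by simp [thetaS, hi]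
      rw [h0, dens_zero]
  have h2 : ∑ i ∈ S.1.1, ∑ j ∈ S.1.2, (A * x i j - A ^ 2 / 2)
      = A * XS S x - A ^ 2 * (n : ℝ) ^ 2 / 2 := by
    simp only [Finset.sum_sub_distrib, Finset.sum_const, nsmul_eq_mul, ← Finset.mul_sum,
      S.2.1, S.2.2, XS]
    ring
  rw [h1]
  calc ∏ i ∈ S.1.1, ∏ j ∈ S.1.2, ENNReal.ofReal (Real.exp (A * x i j - A ^ 2 / 2))
      = ∏ i ∈ S.1.1, ENNReal.ofReal (Real.exp (∑ j ∈ S.1.2, (A * x i j - A ^ 2 / 2))) :=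
        Finset.prod_congr rfl fun i _ => hof _ _
    _ = ENNReal.ofReal (Real.exp (∑ i ∈ S.1.1, ∑ j ∈ S.1.2, (A * x i j - A ^ 2 / 2))) := hof _ _
    _ = _ := by rw [h2]

theorem PthetaS_lintegral (A : ℝ) (S : SIdx n N) {U : Set (Fin N → Fin N → ℝ)}
    (hU : MeasurableSet U) :
    PTheta N (thetaS A S) U
      = ∫⁻ x in U, ENNReal.ofReal (Real.exp (A * XS S x - A ^ 2 * (n : ℝ) ^ 2 / 2))
          ∂(PTheta N 0) := by
  rw [PTheta_withDensity, withDensity_apply _ hU]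
  exact setLIntegral_congr_fun hU (fun x _ => prod_dens_thetaS A S x)

instance instProbPTheta (N : ℕ) (θ : Fin N → Fin N → ℝ) :
    IsProbabilityMeasure (PTheta N θ) := by unfold PTheta; infer_instance

/-- The exponential tilt `exp(A X_S − A²n²/2)`. -/
def gA (A : ℝ) {n N : ℕ} (S : SIdx n N) (x : Fin N → Fin N → ℝ) : ℝ :=
  Real.exp (A * XS S x - A ^ 2 * (n : ℝ) ^ 2 / 2)

lemma measurable_XS (S : SIdx n N) : Measurable (XS S) :=
  Finset.measurable_sum _ fun i _ => Finset.measurable_sum _ fun j _ =>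
    (measurable_pi_apply j).comp (measurable_pi_apply i)

lemma measurable_gA (A : ℝ) (S : SIdx n N) : Measurable (gA A S) :=
  Real.measurable_exp.comp ((measurable_const.mul (measurable_XS S)).sub measurable_const)

lemma gA_pos (A : ℝ) (S : SIdx n N) (x : Fin N → Fin N → ℝ) : 0 < gA A S x := Real.exp_pos _

lemma setLintegral_gA (A : ℝ) (S : SIdx n N) {U : Set (Fin N → Fin N → ℝ)}
    (hU : MeasurableSet U) :
    ∫⁻ x in U, ENNReal.ofReal (gA A S x) ∂(PTheta N 0) = PTheta N (thetaS A S) U :=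
  (PthetaS_lintegral A S hU).symm

lemma lintegral_gA (A : ℝ) (S : SIdx n N) :
    ∫⁻ x, ENNReal.ofReal (gA A S x) ∂(PTheta N 0) = 1 := by
  have h := setLintegral_gA A S (U := Set.univ) MeasurableSet.univ
  rw [Measure.restrict_univ] at h
  rw [h]
  exact measure_univ

lemma integrable_gA (A : ℝ) (S : SIdx n N) : Integrable (gA A S) (PTheta N 0) :=
  ⟨(measurable_gA A S).aestronglyMeasurable,
    (hasFiniteIntegral_iff_ofReal (ae_of_all _ fun x => (gA_pos A S x).le)).2
      (by rw [lintegral_gA A S]; exact ENNReal.one_lt_top)⟩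

lemma setIntegral_gA (A : ℝ) (S : SIdx n N) {U : Set (Fin N → Fin N → ℝ)}
    (hU : MeasurableSet U) :
    ∫ x in U, gA A S x ∂(PTheta N 0) = (PTheta N (thetaS A S) U).toReal := by
  rw [integral_eq_lintegral_of_nonneg_ae (ae_of_all _ fun x => (gA_pos A S x).le)
    ((measurable_gA A S).aestronglyMeasurable.restrict), setLintegral_gA A S hU]

lemma gA_sq (A : ℝ) (S : SIdx n N) (x : Fin N → Fin N → ℝ) :
    gA A S x ^ 2 = Real.exp (A ^ 2 * (n : ℝ) ^ 2) * gA (2 * A) S x := by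
  unfold gA
  rw [← Real.exp_add, sq, ← Real.exp_add]
  congr 1
  ring

end RiskAux

set_option maxHeartbeats 1000000 in
open RiskAux in
/-- **Truncated-likelihood lower bound on the minimax risk.**  For any A ∈ ℝ, any
positive integers n ≤ N, and any family of measurable events (E_S)_{S ∈ S},
`R_n(A) ≥ E₀(L^E_π) − (1/2)√(Var₀(L^E_π))`. -/
theorem risk_lowerbound_truncated (n N : ℕ) (hn : 0 < n) (hnN : n ≤ N) (A : ℝ)
    (E : SIdx n N → Set (Fin N → Fin N → ℝ)) (hE : ∀ S, MeasurableSet (E S)) :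
    (∫ x, LpiE n N A E x ∂(PTheta N 0))
        - (1 / 2) * Real.sqrt (variance (LpiE n N A E) (PTheta N 0))
      ≤ minimaxRisk n N A := by
  classical
  haveI : IsProbabilityMeasure (PTheta N 0) := instProbPTheta N 0
  have hc0 : (0:ℝ) < ((N.choose n : ℝ))^2 := by
    have h1 : 0 < (N.choose n : ℝ) := by exact_mod_cast Nat.choose_pos hnN
    positivity
  have hcardN : (Fintype.card (SIdx n N) : ℝ) = ((N.choose n : ℝ))^2 := by
    have h1 : Fintype.card (SIdx n N) = (N.choose n)^2 := by
      have e : SIdx n N ≃ {R : Finset (Fin N) // R.card = n} × {C : Finset (Fin N) // C.card = n} :=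
        ⟨fun S => (⟨S.1.1, S.2.1⟩, ⟨S.1.2, S.2.2⟩), fun p => ⟨(p.1.1, p.2.1), p.1.2, p.2.2⟩,
         fun S => rfl, fun p => rfl⟩
      have : Fintype.card (SIdx n N)
          = Fintype.card ({R : Finset (Fin N) // R.card = n} × {C : Finset (Fin N) // C.card = n}) :=
        Fintype.card_congr e
      rw [this, Fintype.card_prod, Fintype.card_finset_len, Fintype.card_fin, sq]
    rw [h1]; push_cast; ring
  -- basic facts about indicator summands
  have hfm : ∀ S : SIdx n N, Measurable ((E S).indicator (gA A S)) := fun S =>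
    (measurable_gA A S).indicator (hE S)
  have hfnn : ∀ (S : SIdx n N) x, 0 ≤ (E S).indicator (gA A S) x := fun S x =>
    Set.indicator_nonneg (fun y _ => (gA_pos A S y).le) x
  have hfle : ∀ (S : SIdx n N) x, (E S).indicator (gA A S) x ≤ gA A S x := fun S x =>
    Set.indicator_le_self' (fun y _ => (gA_pos A S y).le) x
  have hfint : ∀ S : SIdx n N, Integrable ((E S).indicator (gA A S)) (PTheta N 0) := fun S =>
    (integrable_gA A S).mono' (hfm S).aestronglyMeasurable
      (ae_of_all _ fun x => by rw [Real.norm_eq_abs, abs_of_nonneg (hfnn S x)]; exact hfle S x)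
  have hLrepr : LpiE n N A E
      = fun x => (((N.choose n : ℝ))^2)⁻¹ * ∑ S : SIdx n N, (E S).indicator (gA A S) x := rfl
  have hLnn : ∀ x, 0 ≤ LpiE n N A E x := fun x =>
    mul_nonneg (inv_nonneg.2 hc0.le) (Finset.sum_nonneg fun S _ => hfnn S x)
  have hLm : Measurable (LpiE n N A E) := by
    rw [hLrepr]; exact (Finset.measurable_sum _ fun S _ => hfm S).const_mul _
  have hLint : Integrable (LpiE n N A E) (PTheta N 0) := by
    rw [hLrepr]
    exact (integrable_finset_sum _ fun S _ => hfint S).const_mul _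
  -- square integrability
  have hsqS : ∀ S : SIdx n N, MemLp ((E S).indicator (gA A S)) 2 (PTheta N 0) := by
    intro S
    refine (memLp_two_iff_integrable_sq (hfm S).aestronglyMeasurable).2 ?_
    refine Integrable.mono' (g := fun x => Real.exp (A^2*(n:ℝ)^2) * gA (2*A) S x)
      ((integrable_gA (2*A) S).const_mul _)
      (((hfm S).pow_const 2).aestronglyMeasurable) (ae_of_all _ fun x => ?_)
    rw [Real.norm_eq_abs, abs_of_nonneg (sq_nonneg _)]
    show (E S).indicator (gA A S) x ^ 2 ≤ Real.exp (A^2*(n:ℝ)^2) * gA (2*A) S x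
    rw [← gA_sq A S x]
    exact pow_le_pow_left₀ (hfnn S x) (hfle S x) 2
  have hL2 : MemLp (LpiE n N A E) 2 (PTheta N 0) := by
    rw [hLrepr]
    exact (memLp_finset_sum Finset.univ (fun S _ => hsqS S)).const_mul _
  set m : ℝ := ∫ x, LpiE n N A E x ∂(PTheta N 0) with hmdef
  -- value of the mean, and m ≤ 1
  have hm_le : m ≤ 1 := by
    have hm_eq : m = (((N.choose n : ℝ))^2)⁻¹
        * ∑ S : SIdx n N, (PTheta N (thetaS A S) (E S)).toReal := by
      rw [hmdef, hLrepr, integral_const_mul, integral_finset_sum _ fun S _ => hfint S]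
      congr 1
      refine Finset.sum_congr rfl fun S _ => ?_
      rw [integral_indicator (hE S), setIntegral_gA A S (hE S)]
    have hsum : ∑ S : SIdx n N, (PTheta N (thetaS A S) (E S)).toReal
        ≤ (Fintype.card (SIdx n N) : ℝ) := by
      have h5 := Finset.sum_le_card_nsmul Finset.univ
        (fun S : SIdx n N => (PTheta N (thetaS A S) (E S)).toReal) 1
        (fun S _ => by
          haveI := instProbPTheta N (thetaS A S)
          exact ENNReal.toReal_mono ENNReal.one_ne_top prob_le_one)
      rw [nsmul_eq_mul, mul_one, Finset.card_univ] at h5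
      exact h5
    rw [hm_eq]
    calc (((N.choose n : ℝ))^2)⁻¹ * ∑ S : SIdx n N, (PTheta N (thetaS A S) (E S)).toReal
        ≤ (((N.choose n : ℝ))^2)⁻¹ * ((N.choose n : ℝ))^2 := by
          apply mul_le_mul_of_nonneg_left _ (inv_nonneg.2 hc0.le)
          rw [← hcardN]; exact hsum
      _ = 1 := inv_mul_cancel₀ hc0.ne'
  -- integrability around m
  have hInt_sub : Integrable (fun x => LpiE n N A E x - m) (PTheta N 0) :=
    hLint.sub (integrable_const m)
  have hint_sub0 : ∫ x, (LpiE n N A E x - m) ∂(PTheta N 0) = 0 := by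
    rw [integral_sub hLint (integrable_const m), integral_const]; simp [hmdef]
  have habs_int : Integrable (fun x => |LpiE n N A E x - m|) (PTheta N 0) := hInt_sub.abs
  have hL2sub : MemLp (fun x => LpiE n N A E x - m) 2 (PTheta N 0) := hL2.sub (memLp_const m)
  have hsq_int : Integrable (fun x => (LpiE n N A E x - m)^2) (PTheta N 0) := hL2sub.integrable_sq
  -- variance identity
  have hvar : variance (LpiE n N A E) (PTheta N 0)
      = ∫ x, (LpiE n N A E x - m)^2 ∂(PTheta N 0) := by
    rw [variance_eq_sub hL2]
    have h2 : ∫ x, (LpiE n N A E x - m)^2 ∂(PTheta N 0)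
        = (∫ x, (LpiE n N A E x)^2 ∂(PTheta N 0)) - 2*m*m + m^2 := by
      have e1 : (fun x => (LpiE n N A E x - m)^2)
          = fun x => ((LpiE n N A E x)^2 - (2*m) * LpiE n N A E x) + m^2 :=
        funext fun x => by ring
      have hi1 : Integrable (fun x => LpiE n N A E x ^ 2 - 2*m*LpiE n N A E x) (PTheta N 0) :=
        hL2.integrable_sq.sub (hLint.const_mul (2*m))
      rw [e1, integral_add hi1 (integrable_const _),
        integral_sub hL2.integrable_sq (hLint.const_mul (2*m)), integral_const_mul,
        integral_const, ← hmdef]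
      simp only [probReal_univ, smul_eq_mul, one_mul]
    simp only [Pi.pow_apply]
    rw [← hmdef, h2]
    ring
  -- Cauchy–Schwarz
  have hcs : ∫ x, |LpiE n N A E x - m| ∂(PTheta N 0)
      ≤ Real.sqrt (∫ x, (LpiE n N A E x - m)^2 ∂(PTheta N 0)) := by
    have hpq : Real.HolderConjugate 2 2 := Real.holderConjugate_iff.mpr ⟨one_lt_two, by norm_num⟩
    have h2e : (ENNReal.ofReal (2:ℝ)) = 2 := by
      rw [ENNReal.ofReal_ofNat]
    have hf2 : MemLp (fun x => |LpiE n N A E x - m|) (ENNReal.ofReal (2:ℝ)) (PTheta N 0) := by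
      rw [h2e]; exact hL2sub.abs
    have hg2 : MemLp (fun _ : Fin N → Fin N → ℝ => (1:ℝ)) (ENNReal.ofReal (2:ℝ)) (PTheta N 0) := by
      rw [h2e]; exact memLp_const 1
    have h := integral_mul_le_Lp_mul_Lq_of_nonneg hpq
      (ae_of_all _ fun x => abs_nonneg (LpiE n N A E x - m))
      (ae_of_all _ fun _ => zero_le_one) hf2 hg2
    simp only [mul_one, Real.one_rpow, integral_const, probReal_univ,
      smul_eq_mul, one_mul] at h
    have e1 : ∀ y : ℝ, |y| ^ (2:ℝ) = y^2 := fun y => by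
      rw [show (2:ℝ) = ((2:ℕ):ℝ) by norm_num, Real.rpow_natCast, sq_abs]
    simp only [e1] at h
    rw [Real.sqrt_eq_rpow]
    exact h
  -- the max / min pointwise machinery
  have hmax_eq : (fun x => max 0 (LpiE n N A E x - m))
      = fun x => ((LpiE n N A E x - m) + |LpiE n N A E x - m|)/2 := funext fun x => by
    rcases le_total 0 (LpiE n N A E x - m) with h|h
    · rw [max_eq_right h, abs_of_nonneg h]; ring
    · rw [max_eq_left h, abs_of_nonpos h]; ring
  have hmax_int : Integrable (fun x => max 0 (LpiE n N A E x - m)) (PTheta N 0) := by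
    rw [hmax_eq]; exact (hInt_sub.add habs_int).div_const 2
  have hmax_val : ∫ x, max 0 (LpiE n N A E x - m) ∂(PTheta N 0)
      = (1/2) * ∫ x, |LpiE n N A E x - m| ∂(PTheta N 0) := by
    rw [hmax_eq]
    rw [show (fun x => ((LpiE n N A E x - m) + |LpiE n N A E x - m|)/2)
        = fun x => ((LpiE n N A E x - m) + |LpiE n N A E x - m|) * (1/2) from
      funext fun x => by ring]
    rw [integral_mul_const, integral_add hInt_sub habs_int, hint_sub0]
    ring
  have hminm : Integrable (fun x => min 1 (LpiE n N A E x)) (PTheta N 0) := by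
    refine (integrable_const (1:ℝ)).mono'
      ((measurable_const.min hLm).aestronglyMeasurable) (ae_of_all _ fun x => ?_)
    rw [Real.norm_eq_abs, abs_of_nonneg (le_min zero_le_one (hLnn x))]
    exact min_le_left _ _
  -- lower bound for ∫ min 1 L
  have hmin_lb : m - (1/2) * Real.sqrt (variance (LpiE n N A E) (PTheta N 0))
      ≤ ∫ x, min 1 (LpiE n N A E x) ∂(PTheta N 0) := by
    have hpt : ∀ x, LpiE n N A E x - max 0 (LpiE n N A E x - m) ≤ min 1 (LpiE n N A E x) := by
      intro x
      rcases le_total (LpiE n N A E x) 1 with h|h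
      · rw [min_eq_right h]
        have := le_max_left (0:ℝ) (LpiE n N A E x - m); linarith
      · rw [min_eq_left h]
        have h2 : max 0 (LpiE n N A E x - m) = LpiE n N A E x - m :=
          max_eq_right (by linarith)
        rw [h2]; linarith
    have h1 : ∫ x, (LpiE n N A E x - max 0 (LpiE n N A E x - m)) ∂(PTheta N 0)
        ≤ ∫ x, min 1 (LpiE n N A E x) ∂(PTheta N 0) :=
      integral_mono (hLint.sub hmax_int) hminm hpt
    rw [integral_sub hLint hmax_int, hmax_val] at h1
    have h3 : Real.sqrt (∫ x, (LpiE n N A E x - m)^2 ∂(PTheta N 0))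
        = Real.sqrt (variance (LpiE n N A E) (PTheta N 0)) := by rw [hvar]
    have h4 : ∫ x, |LpiE n N A E x - m| ∂(PTheta N 0)
        ≤ Real.sqrt (variance (LpiE n N A E) (PTheta N 0)) := h3 ▸ hcs
    calc m - (1/2) * Real.sqrt (variance (LpiE n N A E) (PTheta N 0))
        ≤ m - (1/2) * ∫ x, |LpiE n N A E x - m| ∂(PTheta N 0) := by linarith
      _ ≤ _ := h1
  -- now bound each test's risk
  haveI : Nonempty {T : Set (Fin N → Fin N → ℝ) // MeasurableSet T} :=
    ⟨⟨∅, MeasurableSet.empty⟩⟩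
  refine le_ciInf fun Tp => ?_
  obtain ⟨T, hT⟩ := Tp
  rw [testRisk]
  -- pieces
  have hminT : ∫ x in T, min 1 (LpiE n N A E x) ∂(PTheta N 0) ≤ (PTheta N 0 T).toReal := by
    have h1 : ∫ x in T, min 1 (LpiE n N A E x) ∂(PTheta N 0) ≤ ∫ x in T, (1:ℝ) ∂(PTheta N 0) :=
      integral_mono hminm.integrableOn (integrable_const 1).integrableOn
        (fun x => min_le_left _ _)
    rwa [setIntegral_const, smul_eq_mul, mul_one] at h1
  have hsupTc : ∫ x in Tᶜ, min 1 (LpiE n N A E x) ∂(PTheta N 0)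
      ≤ ⨆ θ : ThetaSet A n N, (PTheta N θ.1 Tᶜ).toReal := by
    have hbdd : BddAbove (Set.range fun θ : ThetaSet A n N => (PTheta N θ.1 Tᶜ).toReal) := by
      refine ⟨1, ?_⟩
      rintro r ⟨θ, rfl⟩
      haveI := instProbPTheta N θ.1
      exact ENNReal.toReal_mono ENNReal.one_ne_top prob_le_one
    have hsup1 : ∀ S : SIdx n N, (PTheta N (thetaS A S) Tᶜ).toReal
        ≤ ⨆ θ : ThetaSet A n N, (PTheta N θ.1 Tᶜ).toReal := fun S =>
      le_ciSup hbdd (⟨thetaS A S, thetaS_mem A S⟩ : ThetaSet A n N)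
    have h1 : ∀ S : SIdx n N, ∫ x in Tᶜ, (E S).indicator (gA A S) x ∂(PTheta N 0)
        ≤ (PTheta N (thetaS A S) Tᶜ).toReal := by
      intro S
      rw [← setIntegral_gA A S hT.compl]
      exact integral_mono (hfint S).integrableOn (integrable_gA A S).integrableOn
        (fun x => hfle S x)
    have h2 : ∫ x in Tᶜ, LpiE n N A E x ∂(PTheta N 0)
        = (((N.choose n : ℝ))^2)⁻¹ * ∑ S : SIdx n N,
            ∫ x in Tᶜ, (E S).indicator (gA A S) x ∂(PTheta N 0) := by
      rw [hLrepr, integral_const_mul, integral_finset_sum _ fun S _ => (hfint S).integrableOn]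
    have h3 : ∫ x in Tᶜ, LpiE n N A E x ∂(PTheta N 0)
        ≤ ⨆ θ : ThetaSet A n N, (PTheta N θ.1 Tᶜ).toReal := by
      rw [h2]
      have hsum : ∑ S : SIdx n N, ∫ x in Tᶜ, (E S).indicator (gA A S) x ∂(PTheta N 0)
          ≤ ∑ S : SIdx n N, (PTheta N (thetaS A S) Tᶜ).toReal :=
        Finset.sum_le_sum fun S _ => h1 S
      have hsum2 : ∑ S : SIdx n N, (PTheta N (thetaS A S) Tᶜ).toReal
          ≤ (Fintype.card (SIdx n N) : ℝ) * ⨆ θ : ThetaSet A n N, (PTheta N θ.1 Tᶜ).toReal := by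
        have := Finset.sum_le_card_nsmul Finset.univ
          (fun S : SIdx n N => (PTheta N (thetaS A S) Tᶜ).toReal)
          (⨆ θ : ThetaSet A n N, (PTheta N θ.1 Tᶜ).toReal) (fun S _ => hsup1 S)
        rw [nsmul_eq_mul, Finset.card_univ] at this
        exact this
      calc (((N.choose n : ℝ))^2)⁻¹ * ∑ S : SIdx n N,
            ∫ x in Tᶜ, (E S).indicator (gA A S) x ∂(PTheta N 0)
          ≤ (((N.choose n : ℝ))^2)⁻¹ * ((((N.choose n : ℝ))^2)
              * ⨆ θ : ThetaSet A n N, (PTheta N θ.1 Tᶜ).toReal) := by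
            apply mul_le_mul_of_nonneg_left _ (inv_nonneg.2 hc0.le)
            rw [← hcardN]
            exact le_trans hsum hsum2
        _ = ⨆ θ : ThetaSet A n N, (PTheta N θ.1 Tᶜ).toReal := by
            rw [← mul_assoc, inv_mul_cancel₀ hc0.ne', one_mul]
    refine le_trans ?_ h3
    exact integral_mono hminm.integrableOn hLint.integrableOn (fun x => min_le_right _ _)
  have hsplit : ∫ x in T, min 1 (LpiE n N A E x) ∂(PTheta N 0)
      + ∫ x in Tᶜ, min 1 (LpiE n N A E x) ∂(PTheta N 0)
      = ∫ x, min 1 (LpiE n N A E x) ∂(PTheta N 0) := integral_add_compl hT hminm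
  linarith [hmin_lb, hminT, hsupTc, hsplit]

end
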